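/- Correctness of the repartition-join MapReduce evaluation of a single semi-join: the set of tuples output by the reduce stage (output ā for each request message [Req; Out ā] in a group containing at least one assert message) equals the result of the query Z := SELECT w̄ FROM α WHERE κ. -/
import Mathlib


/-- A tuple of data values conforms to a vector of terms (terms are data
values `Sum.inl d` or variables `Sum.inr x`). -/
def Conforms {D V : Type*} {n : ℕ} (a : Fin n → D) (t : Fin n → D ⊕ V) : Prop :=
  (∀ i j, t i = t j → a i = a j) ∧ (∀ i (d : D), t i = Sum.inl d → d = a i)

/-- Correctness of the one-round repartition-join MapReduce evaluation of a
single semi-join `Z := SELECT w̄ FROM α WHERE κ` with guard atom `α = R(t̄)`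
(term vector `t`), conditional atom `κ` (term vector `v`), output variables
`w` occurring in `t` at positions `posw`, and join key `z` (the variables
common to `t` and `v`) occurring at positions `pzt` in `t` and `pzv` in `v`.

The set of tuples output by the reduce stage — an output tuple `ā` for a
request message with key `b̄` in a group containing an assert message with the
same key — equals the result of the query. -/
theorem repartition_join_correct {D V : Type*} {m p q s : ℕ}
    (t : Fin m → D ⊕ V) (v : Fin p → D ⊕ V)
    (Rfacts : Set (Fin m → D)) (Tfacts : Set (Fin p → D))
    -- output variables w̄ and their positions in the guard
    (w : Fin q → V) (posw : Fin q → Fin m)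
    (hw : ∀ j, t (posw j) = Sum.inr (w j))
    -- join key z̄: variables occurring in both t̄ and v̄
    (z : Fin s → V) (pzt : Fin s → Fin m) (pzv : Fin s → Fin p)
    (hzt : ∀ l, t (pzt l) = Sum.inr (z l))
    (hzv : ∀ l, v (pzv l) = Sum.inr (z l))
    (hzcover : ∀ x : V, (∃ i, t i = Sum.inr x) → (∃ j, v j = Sum.inr x) →
      ∃ l, z l = x) :
    -- MapReduce output = query semantics
    {a : Fin q → D | ∃ b : Fin s → D,
        (∃ f ∈ Rfacts, Conforms f t ∧ (∀ l, f (pzt l) = b l) ∧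
          (∀ j, f (posw j) = a j)) ∧
        (∃ g ∈ Tfacts, Conforms g v ∧ ∀ l, g (pzv l) = b l)} =
    {a : Fin q → D | ∃ f ∈ Rfacts, Conforms f t ∧ (∀ j, f (posw j) = a j) ∧
        ∃ g ∈ Tfacts, Conforms g v ∧
          ∀ (i : Fin m) (j : Fin p) (x : V),
            t i = Sum.inr x → v j = Sum.inr x → f i = g j} := by
  ext a
  simp only [Set.mem_setOf_eq]
  constructor
  · rintro ⟨b, ⟨f, hf, hft, hfb, hfa⟩, ⟨g, hg, hgv, hgb⟩⟩
    refine ⟨f, hf, hft, hfa, g, hg, hgv, ?_⟩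
    intro i j x hti hvj
    obtain ⟨l, hl⟩ := hzcover x ⟨i, hti⟩ ⟨j, hvj⟩
    have h1 : f i = f (pzt l) := hft.1 i (pzt l) (by rw [hti, hzt, hl])
    have h2 : g (pzv l) = g j := hgv.1 (pzv l) j (by rw [hvj, hzv, hl])
    rw [h1, hfb, ← hgb, h2]
  · rintro ⟨f, hf, hft, hfa, g, hg, hgv, hmatch⟩
    exact ⟨fun l => f (pzt l), ⟨f, hf, hft, fun l => rfl, hfa⟩,
      ⟨g, hg, hgv, fun l => (hmatch (pzt l) (pzv l) (z l) (hzt l) (hzv l)).symm⟩⟩
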